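/- Let R > 0, let l ≥ 1 and m ≥ 0 be integers, and let κ, Q be real numbers. Suppose V, W, U : ℝ → ℝ are differentiable at every r ∈ (0,R) and satisfy, for all r ∈ (0,R): (i) W(r) + (l+1)·V(r) = 0, and (ii) 0 = −[ ( κ·(l+1)/2 + m )·V'(r) + m·(l+1)·V(r)/r − ( κ·(l+1)/2 )·W(r)/r ] + (l+2)·Q·[ U'(r) + (l+1)·U(r)/r ]. If in addition the function F(r) := −( κ·(l+1)/2 + m )·V(r) + (l+2)·Q·U(r) tends to a finite limit as r → 0⁺ (regularity at the center of the star), then F(r) = 0 for all r ∈ (0,R). -/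

import Mathlib

open Set

/-- Polar-led case with regularity: the combination
`F = −(κ(l+1)/2 + m)·V + (l+2)·Q·U` solves `F' + ((l+1)/r)·F = 0`; if moreover
`F` has a finite limit as `r → 0⁺` (regularity at the center of the star),
then `F ≡ 0` on `(0,R)`. -/
theorem stmt_6 (R : ℝ) (hR : 0 < R) (l m : ℕ) (hl : 1 ≤ l)
    (κ Q : ℝ) (V W U V' W' U' : ℝ → ℝ)
    (hV : ∀ r ∈ Ioo (0:ℝ) R, HasDerivAt V (V' r) r)
    (hW : ∀ r ∈ Ioo (0:ℝ) R, HasDerivAt W (W' r) r)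
    (hU : ∀ r ∈ Ioo (0:ℝ) R, HasDerivAt U (U' r) r)
    (h1 : ∀ r ∈ Ioo (0:ℝ) R, W r + ((l:ℝ) + 1) * V r = 0)
    (h2 : ∀ r ∈ Ioo (0:ℝ) R,
      0 = -((κ * ((l:ℝ) + 1) / 2 + m) * V' r + (m:ℝ) * ((l:ℝ) + 1) * V r / r
            - (κ * ((l:ℝ) + 1) / 2) * W r / r)
          + ((l:ℝ) + 2) * Q * (U' r + ((l:ℝ) + 1) * U r / r))
    (hreg : ∃ L : ℝ, Filter.Tendsto
      (fun r => -(κ * ((l:ℝ) + 1) / 2 + m) * V r + ((l:ℝ) + 2) * Q * U r)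
      (nhdsWithin 0 (Ioi 0)) (nhds L)) :
    ∀ r ∈ Ioo (0:ℝ) R,
      -(κ * ((l:ℝ) + 1) / 2 + m) * V r + ((l:ℝ) + 2) * Q * U r = 0 := by
  obtain ⟨L, hL⟩ := hreg
  set A : ℝ := κ * ((l:ℝ) + 1) / 2 + m with hA
  set B : ℝ := ((l:ℝ) + 2) * Q with hB
  set F : ℝ → ℝ := fun r => -A * V r + B * U r with hF
  set G : ℝ → ℝ := fun r => r ^ (l + 1) * F r with hG
  -- G has derivative 0 on Ioo 0 R
  have hGd : ∀ r ∈ Ioo (0:ℝ) R, HasDerivAt G 0 r := by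
    intro r hr
    have hr0 : r ≠ 0 := ne_of_gt hr.1
    have hFd : HasDerivAt F (-A * V' r + B * U' r) r :=
      ((hV r hr).const_mul (-A)).add ((hU r hr).const_mul B)
    have hpow : HasDerivAt (fun x : ℝ => x ^ (l + 1))
        (((l:ℝ) + 1) * r ^ l) r := by
      have := hasDerivAt_pow (l + 1) r
      simpa using this
    have hprod : HasDerivAt G
        (((l:ℝ) + 1) * r ^ l * F r + r ^ (l + 1) * (-A * V' r + B * U' r)) r :=
      hpow.mul hFd
    have e2 := h2 r hr
    have e1 := h1 r hr
    have hW' : W r = -(((l:ℝ) + 1) * V r) := by linarith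
    rw [hW'] at e2
    field_simp at e2
    have bracket : (((l:ℝ) + 1) * F r + r * (-A * V' r + B * U' r)) = 0 := by
      have h3 : r ^ 2 * (((l:ℝ) + 1) * F r + r * (-A * V' r + B * U' r)) = 0 := by
        simp only [hF, hA, hB]
        ring_nf
        linear_combination (-r^2/2 : ℝ) * e2
      rcases mul_eq_zero.mp h3 with h | h
      · exact absurd h (pow_ne_zero _ hr0)
      · exact h
    have key : ((l:ℝ) + 1) * r ^ l * F r + r ^ (l + 1) * (-A * V' r + B * U' r) = 0 := by
      linear_combination (r : ℝ) ^ l * bracket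
    rw [key] at hprod
    exact hprod
  -- G is constant on Ioo 0 R
  have hconv : Convex ℝ (Ioo (0:ℝ) R) := convex_Ioo 0 R
  have hdiff : DifferentiableOn ℝ G (Ioo (0:ℝ) R) := fun r hr =>
    (hGd r hr).differentiableAt.differentiableWithinAt
  have hf0 : ∀ r ∈ Ioo (0:ℝ) R, fderivWithin ℝ G (Ioo (0:ℝ) R) r = 0 := by
    intro r hr
    have h1' := (hGd r hr).hasFDerivAt.fderiv
    rw [fderivWithin_eq_fderiv (isOpen_Ioo.uniqueDiffWithinAt hr) (hGd r hr).differentiableAt, h1']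
    ext x
    simp
  set r₀ : ℝ := R / 2 with hr₀
  have hr₀mem : r₀ ∈ Ioo (0:ℝ) R := ⟨by positivity, by rw [hr₀]; linarith⟩
  have hconst : ∀ r ∈ Ioo (0:ℝ) R, G r = G r₀ := fun r hr =>
    hconv.is_const_of_fderivWithin_eq_zero hdiff hf0 hr hr₀mem
  -- limit argument: G tends to 0 along 0⁺, but G is eventually constant
  have hmem : Ioo (0:ℝ) R ∈ nhdsWithin (0:ℝ) (Ioi 0) := by
    rw [mem_nhdsWithin]
    exact ⟨Iio R, isOpen_Iio, hR, by rintro x ⟨hx1, hx2⟩; exact ⟨hx2, hx1⟩⟩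
  have hGt : Filter.Tendsto G (nhdsWithin 0 (Ioi 0)) (nhds (0 * L)) := by
    have hpowt : Filter.Tendsto (fun r : ℝ => r ^ (l + 1)) (nhdsWithin 0 (Ioi 0)) (nhds 0) := by
      have := (continuous_pow (l + 1)).tendsto (0:ℝ)
      simpa using this.mono_left nhdsWithin_le_nhds
    exact hpowt.mul hL
  have hGt' : Filter.Tendsto G (nhdsWithin 0 (Ioi 0)) (nhds (G r₀)) := by
    have heq : G =ᶠ[nhdsWithin 0 (Ioi 0)] fun _ => G r₀ :=
      Filter.eventuallyEq_of_mem hmem (fun r hr => hconst r hr)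
    exact Filter.Tendsto.congr' heq.symm tendsto_const_nhds
  have hzero : G r₀ = 0 := by
    have := tendsto_nhds_unique hGt' hGt
    simpa using this
  intro r hr
  have hGr : G r = 0 := (hconst r hr).trans hzero
  have hr0 : r ≠ 0 := ne_of_gt hr.1
  have hpne : r ^ (l + 1) ≠ 0 := pow_ne_zero _ hr0
  have hFr : F r = 0 := by
    have h := hGr
    rw [hG] at h
    exact (mul_eq_zero.mp h).resolve_left hpne
  simpa [hF, hA, hB] using hFr
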